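/- arXiv:2007.03217 — 2 statements merged into one kernel-verified Lean document; each statement's English description precedes it below -/
import Mathlib

section
/- Let D_{2n} = ⟨r, s : r^n = s^2 = e, rs = sr^{-1}⟩ be the dihedral group of order 2n with n ≥ 3. Then the vertex connectivity of the enhanced power graph of D_{2n} is 1, and the number of connected components of the enhanced power graph with identity removed equals n + 1. -/
/-- The enhanced power graph of a group `G`: vertices are elements of `G`,
with distinct `u`, `v` adjacent iff both are powers of a common element. -/
def enhancedPowerGraph (G : Type*) [Group G] : SimpleGraph G where
  Adj u v := u ≠ v ∧ ∃ w : G, u ∈ Subgroup.zpowers w ∧ v ∈ Subgroup.zpowers w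
  symm := by
    refine ⟨?_⟩
    rintro u v ⟨h, w, hu, hv⟩
    exact ⟨h.symm, w, hv, hu⟩
  loopless := by
    refine ⟨?_⟩
    rintro u ⟨h, -⟩
    exact h rfl

/-- A dominating vertex: adjacent to every other vertex. -/
def IsDominating {V : Type*} (Γ : SimpleGraph V) (v : V) : Prop :=
  ∀ u, u ≠ v → Γ.Adj v u

/-- The vertex connectivity: the least size of a set of vertices whose removal
leaves a graph that is not connected. -/
noncomputable def vertexConnectivity {V : Type*} (Γ : SimpleGraph V) : ℕ :=
  sInf {n | ∃ s : Set V, s.ncard = n ∧ ¬ (Γ.induce sᶜ).Connected}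

open DihedralGroup Subgroup in
/-- The subgroup of rotations of the dihedral group. -/
def rotSubgroup (n : ℕ) : Subgroup (DihedralGroup n) where
  carrier := {x | ∃ i, x = r i}
  one_mem' := ⟨0, one_def⟩
  mul_mem' := by
    rintro a b ⟨i, rfl⟩ ⟨j, rfl⟩
    exact ⟨i + j, (r_mul_r i j).symm⟩
  inv_mem' := by
    rintro a ⟨i, rfl⟩
    refine ⟨-i, ?_⟩
    rw [eq_comm, eq_inv_iff_mul_eq_one, r_mul_r, neg_add_cancel, ← one_def]

open DihedralGroup Subgroup in
/-- The two-element subgroup generated by a reflection. -/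
def srSubgroup {n : ℕ} (i : ZMod n) : Subgroup (DihedralGroup n) where
  carrier := {1, sr i}
  one_mem' := Or.inl rfl
  mul_mem' := by
    rintro a b (rfl | rfl) (rfl | rfl)
    · exact Or.inl (one_mul 1)
    · exact Or.inr (one_mul _)
    · exact Or.inr (mul_one _)
    · exact Or.inl (sr_mul_self i)
  inv_mem' := by
    rintro a (rfl | rfl)
    · exact Or.inl inv_one
    · exact Or.inr (inv_eq_of_mul_eq_one_right (sr_mul_self i))

open DihedralGroup Subgroup in
lemma mem_zpowers_sr {n : ℕ} {i : ZMod n} {w v : DihedralGroup n}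
    (h1 : sr i ∈ zpowers w) (h2 : v ∈ zpowers w) : v = 1 ∨ v = sr i := by
  cases w with
  | r j =>
      exfalso
      have hle : zpowers (DihedralGroup.r j) ≤ rotSubgroup n :=
        zpowers_le.mpr ⟨j, rfl⟩
      obtain ⟨k, hk⟩ : ∃ k, sr i = DihedralGroup.r k := hle h1
      exact absurd hk (by simp)
  | sr j =>
      have hle : zpowers (sr j) ≤ srSubgroup j :=
        zpowers_le.mpr (Or.inr rfl)
      have hi : sr i = 1 ∨ sr i = sr j := hle h1
      have hv : v = 1 ∨ v = sr j := hle h2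
      rcases hi with hi | hi
      · exact absurd hi (by simp [one_def, -r_zero])
      · rcases hv with hv | hv
        · exact Or.inl hv
        · exact Or.inr (hv.trans hi.symm)

open DihedralGroup Subgroup in
lemma r_mem_zpowers_r_one {n : ℕ} [NeZero n] (i : ZMod n) :
    DihedralGroup.r i ∈ zpowers (DihedralGroup.r (1 : ZMod n)) := by
  refine ⟨(i.val : ℤ), ?_⟩
  show (DihedralGroup.r (1 : ZMod n)) ^ ((i.val : ℕ) : ℤ) = DihedralGroup.r i
  rw [zpow_natCast, r_one_pow, ZMod.natCast_val, ZMod.cast_id]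

lemma induce_adj' {V : Type*} {G : SimpleGraph V} {s : Set V} {a b : s} :
    (G.induce s).Adj a b ↔ G.Adj a.1 b.1 := by
  simp

lemma walk_const {V β : Type*} {G : SimpleGraph V} (f : V → β)
    (h : ∀ u v, G.Adj u v → f u = f v) {u v : V} (p : G.Walk u v) : f u = f v := by
  induction p with
  | nil => rfl
  | cons hadj _ ih => exact (h _ _ hadj).trans ih

lemma reachable_eq_of_isolated {V : Type*} {G : SimpleGraph V} {v : V}
    (h : ∀ u, ¬ G.Adj v u) {u : V} (hr : G.Reachable v u) : v = u := by
  obtain ⟨p⟩ := hr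
  cases p with
  | nil => rfl
  | cons ha _ => exact absurd ha (h _)

open DihedralGroup Subgroup in
theorem stmt_15 (n : ℕ) (hn : 3 ≤ n) :
    vertexConnectivity (enhancedPowerGraph (DihedralGroup n)) = 1 ∧
      Nat.card ((enhancedPowerGraph (DihedralGroup n)).induce
        {g | g ≠ 1}).ConnectedComponent = n + 1 := by
  haveI : NeZero n := ⟨by omega⟩
  haveI : Fact (1 < n) := ⟨by omega⟩
  have hr1 : (DihedralGroup.r (1 : ZMod n) : DihedralGroup n) ≠ 1 := by
    simp [one_def, -r_zero]
  -- reflections are isolated among non-identity elements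
  have key : ∀ (i : ZMod n) (v : DihedralGroup n), v ≠ 1 → v ≠ sr i →
      ¬ (enhancedPowerGraph (DihedralGroup n)).Adj (sr i) v := by
    rintro i v hv1 hvs ⟨-, w, h1, h2⟩
    rcases mem_zpowers_sr h1 h2 with h | h
    · exact hv1 h
    · exact hvs h
  constructor
  · -- vertex connectivity = 1
    have h1mem : 1 ∈ {m | ∃ s : Set (DihedralGroup n), s.ncard = m ∧
        ¬ ((enhancedPowerGraph (DihedralGroup n)).induce sᶜ).Connected} := by
      refine ⟨{1}, Set.ncard_singleton 1, ?_⟩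
      intro hc
      have hsr : (sr (0 : ZMod n) : DihedralGroup n) ∈ ({1}ᶜ : Set (DihedralGroup n)) := by
        simp [one_def, -r_zero]
      have hr : (DihedralGroup.r (1 : ZMod n) : DihedralGroup n) ∈ ({1}ᶜ : Set (DihedralGroup n)) := by
        simpa using hr1
      have hiso : ∀ u, ¬ ((enhancedPowerGraph (DihedralGroup n)).induce
          ({1}ᶜ : Set (DihedralGroup n))).Adj ⟨sr 0, hsr⟩ u := by
        intro u hadj
        obtain ⟨hne, w, h1, h2⟩ := induce_adj'.mp hadj
        rcases mem_zpowers_sr h1 h2 with h | h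
        · exact u.2 (by simp [h])
        · exact hne h.symm
      have := reachable_eq_of_isolated hiso
        (hc.preconnected ⟨sr 0, hsr⟩ ⟨DihedralGroup.r 1, hr⟩)
      simpa using congrArg Subtype.val this
    refine le_antisymm (Nat.sInf_le h1mem) ?_
    rw [Nat.one_le_iff_ne_zero]
    intro h0
    rcases (Nat.sInf_eq_zero.mp h0) with h0 | h0
    · obtain ⟨s, hs0, hsnc⟩ := h0
      have hsE : s = ∅ := (Set.ncard_eq_zero (Set.toFinite s)).mp hs0
      subst hsE
      apply hsnc
      have h1m : (1 : DihedralGroup n) ∈ ((∅ : Set (DihedralGroup n))ᶜ) := by simp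
      rw [SimpleGraph.connected_iff]
      refine ⟨fun a b => ?_, ⟨⟨1, h1m⟩⟩⟩
      have reach1 : ∀ a : ((∅ : Set (DihedralGroup n))ᶜ : Set (DihedralGroup n)),
          ((enhancedPowerGraph (DihedralGroup n)).induce
            ((∅ : Set (DihedralGroup n))ᶜ)).Reachable a ⟨1, h1m⟩ := by
        intro a
        by_cases ha : (a : DihedralGroup n) = 1
        · have : a = ⟨1, h1m⟩ := Subtype.ext ha
          rw [this]
        · refine SimpleGraph.Adj.reachable (induce_adj'.mpr ?_)
          exact ⟨ha, (a : DihedralGroup n),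
              Subgroup.mem_zpowers _, Subgroup.one_mem _⟩
      exact (reach1 a).trans (reach1 b).symm
    · exact absurd h1mem (h0 ▸ Set.notMem_empty 1)
  · -- number of components = n + 1
    set Γ := (enhancedPowerGraph (DihedralGroup n)).induce
      {g : DihedralGroup n | g ≠ 1} with hΓ
    have hsrne : ∀ i : ZMod n, (sr i : DihedralGroup n) ≠ 1 := by
      intro i; simp [one_def, -r_zero]
    let f : {g : DihedralGroup n // g ≠ 1} → Option (ZMod n) := fun x =>
      match x.1 with
      | DihedralGroup.r _ => none
      | DihedralGroup.sr i => some i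
    have hf : ∀ u v, Γ.Adj u v → f u = f v := by
      rintro ⟨u, hu⟩ ⟨v, hv⟩ hadj
      obtain ⟨hne', w, h1, h2⟩ := induce_adj'.mp hadj
      cases u with
      | r i =>
          cases v with
          | r j => rfl
          | sr j =>
              exfalso
              rcases mem_zpowers_sr h2 h1 with h | h
              · exact hu h
              · exact hne' h
      | sr i =>
          exfalso
          rcases mem_zpowers_sr h1 h2 with h | h
          · exact hv h
          · exact hne' h.symm
    let F : Γ.ConnectedComponent → Option (ZMod n) :=
      SimpleGraph.ConnectedComponent.lift f (fun v w p _ => walk_const f hf p)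
    have hFbij : Function.Bijective F := by
      constructor
      · intro c d
        refine SimpleGraph.ConnectedComponent.ind₂ (fun u v huv => ?_) c d
        have huv' : f u = f v := huv
        obtain ⟨u, hu⟩ := u
        obtain ⟨v, hv⟩ := v
        cases u with
        | r i =>
            cases v with
            | r j =>
                by_cases hij : i = j
                · subst hij; rfl
                · refine SimpleGraph.ConnectedComponent.sound
                    (SimpleGraph.Adj.reachable (induce_adj'.mpr ?_))
                  exact ⟨by simp [hij],
                    DihedralGroup.r 1, r_mem_zpowers_r_one i, r_mem_zpowers_r_one j⟩
            | sr j => simp [f] at huv'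
        | sr i =>
            cases v with
            | r j => simp [f] at huv'
            | sr j =>
                have : i = j := by simpa [f] using huv'
                subst this; rfl
      · intro o
        cases o with
        | none => exact ⟨Γ.connectedComponentMk ⟨DihedralGroup.r 1, hr1⟩, rfl⟩
        | some i => exact ⟨Γ.connectedComponentMk ⟨sr i, hsrne i⟩, rfl⟩
    rw [Nat.card_eq_of_bijective F hFbij]
    simp [Nat.card_eq_fintype_card, ZMod.card]
end

section
/- Let Q_{2^n} be the generalized quaternion group of order 2^n, n ≥ 3. Then the vertex connectivity of the enhanced power graph of Q_{2^n} equals 2, and the number of connected components of the proper enhanced power graph (after deleting the identity and the unique element of order 2) equals 2^{n-2} + 1. -/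
section aux
open QuaternionGroup Subgroup

section helpers
variable {m : ℕ}

lemma a_inv (i : ZMod (2*m)) : (a i : QuaternionGroup m)⁻¹ = a (-i) := rfl

lemma a_one_zpow (z : ℤ) : (a 1 : QuaternionGroup m) ^ z = a (z : ZMod (2*m)) := by
  cases z with
  | ofNat t => rw [Int.ofNat_eq_coe, zpow_natCast, a_one_pow]; norm_cast
  | negSucc t =>
    rw [zpow_negSucc, a_one_pow, a_inv]
    congr 1
    push_cast
    ring

lemma a_eq_a_one_pow (i : ZMod (2*m)) [NeZero m] : (a i : QuaternionGroup m) = (a 1) ^ (i.val) := by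
  rw [a_one_pow, ZMod.natCast_val, ZMod.cast_id]

lemma mem_zpowers_a [NeZero m] {x : QuaternionGroup m} {i : ZMod (2*m)}
    (hx : x ∈ zpowers (a i)) : ∃ c, x = a c := by
  obtain ⟨z, hz⟩ := hx
  simp only at hz
  refine ⟨((i.val : ℤ) * z : ℤ), ?_⟩
  rw [← hz, a_eq_a_one_pow i, ← zpow_natCast, ← zpow_mul, a_one_zpow]

lemma neg_m_eq : -(m : ZMod (2*m)) = (m : ZMod (2*m)) := by
  have h2m : ((2*m : ℕ) : ZMod (2*m)) = 0 := ZMod.natCast_self _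
  push_cast at h2m
  linear_combination -h2m

lemma xa_pow_three (i : ZMod (2*m)) : (xa i : QuaternionGroup m) ^ 3 = xa (i + (m : ZMod (2*m))) := by
  rw [pow_succ, xa_sq, a_mul_xa]
  congr 1
  have h2m : ((2*m : ℕ) : ZMod (2*m)) = 0 := ZMod.natCast_self _
  push_cast at h2m
  linear_combination -h2m

lemma mem_zpowers_xa [NeZero m] {x : QuaternionGroup m} {i : ZMod (2*m)}
    (hx : x ∈ zpowers (xa i)) :
    x = 1 ∨ x = a (m : ZMod (2*m)) ∨ x = xa i ∨ x = xa (i + (m : ZMod (2*m))) := by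
  obtain ⟨z, hz⟩ := hx
  simp only at hz
  have ho : orderOf (xa i : QuaternionGroup m) = 4 := orderOf_xa i
  have hmod := zpow_mod_orderOf (xa i : QuaternionGroup m) z
  rw [ho] at hmod
  have hr : z % ((4:ℕ):ℤ) = 0 ∨ z % 4 = 1 ∨ z % 4 = 2 ∨ z % 4 = 3 := by push_cast; omega
  rw [← hz, ← hmod]
  push_cast at hr ⊢
  rcases hr with h | h | h | h <;> rw [h]
  · left; rfl
  · right; right; left; norm_num
  · right; left
    rw [show ((2:ℤ)) = ((2:ℕ):ℤ) by norm_num, zpow_natCast, xa_sq]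
  · right; right; right
    rw [show ((3:ℤ)) = ((3:ℕ):ℤ) by norm_num, zpow_natCast, xa_pow_three]

lemma eq_a_m_of_orderOf_eq_two [NeZero m] {x : QuaternionGroup m} :
    orderOf x = 2 → x = a (m : ZMod (2*m)) := by
  intro hx
  match x with
  | xa j => rw [orderOf_xa] at hx; omega
  | a j =>
    have hsq : (a j : QuaternionGroup m) ^ 2 = 1 := by rw [← hx]; exact pow_orderOf_eq_one _
    rw [sq, a_mul_a, one_def] at hsq
    have hjj : j + j = 0 := by injection hsq
    have : ((j.val + j.val : ℕ) : ZMod (2*m)) = 0 := by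
      push_cast
      rw [ZMod.natCast_val, ZMod.cast_id]; exact hjj
    rw [ZMod.natCast_eq_zero_iff] at this
    have hlt : j.val < 2*m := j.val_lt
    obtain ⟨t, ht⟩ := this
    have hjv : j.val = m * t := by
      have : 2*m*t = 2*(m*t) := by ring
      omega
    have ht1 : t ≤ 1 := by
      by_contra hc
      have : m * 2 ≤ m * t := Nat.mul_le_mul_left m (by omega)
      have := NeZero.pos m
      omega
    have : j.val = 0 ∨ j.val = m := by interval_cases t <;> omega
    rcases this with h | h
    · exfalso
      have : j = 0 := by rwa [← ZMod.val_eq_zero]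
      rw [this, ← one_def] at hx
      simp at hx
    · have : j = (m : ZMod (2*m)) := by
        rw [← ZMod.natCast_zmod_val j, h]
      rw [this]

lemma a_m_ne_one [NeZero m] : (a (m : ZMod (2*m)) : QuaternionGroup m) ≠ 1 := by
  rw [one_def]
  intro h
  have hj : ((m : ℕ) : ZMod (2*m)) = 0 := by injection h
  rw [ZMod.natCast_eq_zero_iff] at hj
  have h1 := NeZero.pos m
  have h2 := Nat.le_of_dvd h1 hj
  omega

lemma a_m_mem_zpowers {k : ℕ} {u : QuaternionGroup (2^k)} (hu : u ≠ 1) :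
    (a ((2^k : ℕ) : ZMod (2*2^k)) : QuaternionGroup (2^k)) ∈ zpowers u := by
  haveI : NeZero (2^k) := ⟨pow_ne_zero k two_ne_zero⟩
  have hcard : Fintype.card (QuaternionGroup (2^k)) = 2^(k+2) := by
    rw [QuaternionGroup.card]; ring
  have hdvd : orderOf u ∣ 2^(k+2) := hcard ▸ orderOf_dvd_card
  obtain ⟨s, hs, ho⟩ := (Nat.dvd_prime_pow Nat.prime_two).mp hdvd
  have hone : orderOf u ≠ 1 := fun h => hu (orderOf_eq_one_iff.mp h)
  have hs1 : 1 ≤ s := by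
    rcases Nat.eq_zero_or_pos s with h | h
    · exfalso; rw [h, pow_zero] at ho; exact hone ho
    · exact h
  have h2 : 2 ∣ orderOf u := ho ▸ dvd_pow_self 2 (by omega : s ≠ 0)
  set x := u ^ (orderOf u / 2) with hx
  have hopos : 0 < orderOf u := by rw [ho]; positivity
  have hxsq : x ^ 2 = 1 := by
    rw [hx, ← pow_mul, Nat.div_mul_cancel h2, pow_orderOf_eq_one]
  have hxne : x ≠ 1 := by
    intro h
    have := orderOf_dvd_of_pow_eq_one (hx ▸ h : u ^ (orderOf u / 2) = 1)
    have h2le : 2 ≤ orderOf u := by omega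
    have := Nat.le_of_dvd (by omega) this
    omega
  haveI : Fact (Nat.Prime 2) := ⟨Nat.prime_two⟩
  have : orderOf x = 2 := orderOf_eq_prime hxsq hxne
  have := eq_a_m_of_orderOf_eq_two this
  rw [← this, hx]
  exact pow_mem (mem_zpowers u) _

lemma reach_inv {V : Type*} {G : SimpleGraph V} {β : Type*} (f : V → β)
    (h : ∀ u v, G.Adj u v → f u = f v) {u v : V} (huv : G.Reachable u v) : f u = f v := by
  obtain ⟨p⟩ := huv
  induction p with
  | nil => rfl
  | cons ha _ ih => exact (h _ _ ha).trans ih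

lemma adj_cases [NeZero m] {u v : QuaternionGroup m}
    (h : (enhancedPowerGraph (QuaternionGroup m)).Adj u v) :
    (∃ i j, u = a i ∧ v = a j) ∨
    ∃ c : ZMod (2*m),
      (u = 1 ∨ u = a (m:ZMod (2*m)) ∨ u = xa c ∨ u = xa (c + (m:ZMod (2*m)))) ∧
      (v = 1 ∨ v = a (m:ZMod (2*m)) ∨ v = xa c ∨ v = xa (c + (m:ZMod (2*m)))) := by
  obtain ⟨hne, w, hu, hv⟩ := h
  match w with
  | a c =>
    obtain ⟨i, hi⟩ := mem_zpowers_a hu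
    obtain ⟨j, hj⟩ := mem_zpowers_a hv
    exact Or.inl ⟨i, j, hi, hj⟩
  | xa c => exact Or.inr ⟨c, mem_zpowers_xa hu, mem_zpowers_xa hv⟩

lemma dom_one {G : Type*} [Group G] {u : G} (hu : u ≠ 1) :
    (enhancedPowerGraph G).Adj 1 u :=
  ⟨fun h => hu h.symm, u, one_mem _, Subgroup.mem_zpowers u⟩

lemma dom_a_m {k : ℕ} {u : QuaternionGroup (2^k)}
    (hu : u ≠ a ((2^k : ℕ) : ZMod (2*2^k))) :
    (enhancedPowerGraph (QuaternionGroup (2^k))).Adj (a ((2^k : ℕ) : ZMod (2*2^k))) u := by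
  haveI : NeZero (2^k) := ⟨pow_ne_zero k two_ne_zero⟩
  refine ⟨fun h => hu h.symm, ?_⟩
  by_cases h1 : u = 1
  · subst h1
    exact ⟨a 1, ⟨((2^k : ℕ) : ℤ), by show a 1 ^ _ = _; rw [a_one_zpow]; norm_cast⟩, one_mem _⟩
  · exact ⟨u, a_m_mem_zpowers h1, Subgroup.mem_zpowers u⟩

lemma connected_of_dom {V : Type*} (G : SimpleGraph V) (s : Set V) (d : V) (hd : d ∈ s)
    (hdom : ∀ u, u ≠ d → G.Adj d u) : (G.induce s).Connected := by
  rw [SimpleGraph.connected_iff]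
  have key : ∀ x : s, (G.induce s).Reachable x ⟨d, hd⟩ := by
    intro x
    by_cases hx : (x : V) = d
    · exact (Subtype.ext hx : x = ⟨d, hd⟩) ▸ SimpleGraph.Reachable.refl x
    · exact SimpleGraph.Adj.reachable (by exact (hdom x hx).symm)
  exact ⟨fun x y => (key x).trans (key y).symm, ⟨⟨d, hd⟩⟩⟩

def isXa : QuaternionGroup m → Bool
  | a _ => false
  | xa _ => true

@[simp] lemma isXa_a (i : ZMod (2*m)) : isXa (a i : QuaternionGroup m) = false := rfl
@[simp] lemma isXa_xa (i : ZMod (2*m)) : isXa (xa i : QuaternionGroup m) = true := rfl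

def Fcls : QuaternionGroup m → Option (ZMod m)
  | a _ => none
  | xa c => some ((c.val : ℕ) : ZMod m)

@[simp] lemma Fcls_a (i : ZMod (2*m)) : Fcls (a i : QuaternionGroup m) = none := rfl
@[simp] lemma Fcls_xa (c : ZMod (2*m)) :
    Fcls (xa c : QuaternionGroup m) = some ((c.val : ℕ) : ZMod m) := rfl

lemma natCast_mod_two_mul [NeZero m] (x : ℕ) : ((x % (2*m) : ℕ) : ZMod m) = (x : ZMod m) := by
  conv_rhs => rw [← Nat.mod_add_div x (2*m)]
  push_cast
  rw [ZMod.natCast_self]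
  ring

lemma val_cast_shift [NeZero m] (c : ZMod (2*m)) :
    (((c + ((m:ℕ) : ZMod (2*m))).val : ℕ) : ZMod m) = ((c.val : ℕ) : ZMod m) := by
  have hm : ((m:ℕ) : ZMod (2*m)).val = m :=
    ZMod.val_natCast_of_lt (by have := NeZero.pos m; omega)
  rw [ZMod.val_add, hm, natCast_mod_two_mul]
  push_cast
  rw [ZMod.natCast_self, add_zero]

lemma orderOf_a_m [NeZero m] : orderOf (a ((m:ℕ) : ZMod (2*m)) : QuaternionGroup m) = 2 := by
  haveI : Fact (Nat.Prime 2) := ⟨Nat.prime_two⟩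
  refine orderOf_eq_prime ?_ a_m_ne_one
  rw [sq, a_mul_a, one_def]
  congr 1
  have : ((2*m : ℕ) : ZMod (2*m)) = 0 := ZMod.natCast_self _
  push_cast at this ⊢
  linear_combination this

end helpers

section ktwo
variable {k : ℕ}

lemma two_le_m (hk : 1 ≤ k) : 2 ≤ 2^k := by
  calc 2 = 2^1 := (pow_one 2).symm
  _ ≤ 2^k := Nat.pow_le_pow_right (by norm_num) hk

lemma one_ne_zero_zmod (hk : 1 ≤ k) : (1 : ZMod (2*2^k)) ≠ 0 := by
  have h := two_le_m hk
  intro h0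
  haveI : Fact (1 < 2*2^k) := ⟨by omega⟩
  have := ZMod.val_one (2*2^k)
  rw [h0, ZMod.val_zero] at this
  omega

lemma one_ne_m_zmod (hk : 1 ≤ k) : (1 : ZMod (2*2^k)) ≠ ((2^k : ℕ) : ZMod (2*2^k)) := by
  have h := two_le_m hk
  intro h0
  haveI : Fact (1 < 2*2^k) := ⟨by omega⟩
  have h1 := ZMod.val_one (2*2^k)
  have h2 : ((2^k:ℕ) : ZMod (2*2^k)).val = 2^k := ZMod.val_natCast_of_lt (by omega)
  rw [h0, h2] at h1
  omega

lemma m_ne_zero_zmod : ((2^k : ℕ) : ZMod (2*2^k)) ≠ 0 := by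
  intro h0
  have hp : 0 < 2^k := by positivity
  have h2 : ((2^k:ℕ) : ZMod (2*2^k)).val = 2^k := ZMod.val_natCast_of_lt (by omega)
  rw [h0, ZMod.val_zero] at h2
  have : 0 < 2^k := by positivity
  omega

lemma a_one_mem_T (hk : 1 ≤ k) :
    (a 1 : QuaternionGroup (2^k)) ≠ 1 ∧ (a 1 : QuaternionGroup (2^k)) ≠ a ((2^k:ℕ) : ZMod (2*2^k)) := by
  constructor
  · rw [one_def]
    intro h
    exact one_ne_zero_zmod hk (by injection h)
  · intro h
    exact one_ne_m_zmod hk (by injection h)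

lemma vc_eq_two (hk : 1 ≤ k) :
    vertexConnectivity (enhancedPowerGraph (QuaternionGroup (2^k))) = 2 := by
  haveI : NeZero (2^k) := ⟨pow_ne_zero k two_ne_zero⟩
  set Q := QuaternionGroup (2^k)
  set G := enhancedPowerGraph Q
  set aM : Q := a ((2^k:ℕ) : ZMod (2*2^k)) with haM
  have hOneNe : (1 : Q) ≠ aM := fun h => a_m_ne_one h.symm
  set S := {n | ∃ s : Set Q, s.ncard = n ∧ ¬ (G.induce sᶜ).Connected} with hS
  have h2 : 2 ∈ S := by
    refine ⟨{1, aM}, Set.ncard_pair hOneNe, ?_⟩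
    intro hcon
    have hmem : ∀ x : Q, x ≠ 1 → x ≠ aM → x ∈ ({1, aM} : Set Q)ᶜ := by
      intro x h1 h2 hx
      rcases hx with hx | hx
      · exact h1 hx
      · exact h2 hx
    have ha1 : (a 1 : Q) ∈ ({1, aM} : Set Q)ᶜ :=
      hmem _ (a_one_mem_T hk).1 (a_one_mem_T hk).2
    have hxa0 : (xa 0 : Q) ∈ ({1, aM} : Set Q)ᶜ := by
      refine hmem _ (fun h => ?_) (fun h => ?_)
      · rw [one_def] at h; cases h
      · rw [haM] at h; cases h
    have hf : ∀ u v : (({1, aM} : Set Q)ᶜ : Set Q),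
        (G.induce _).Adj u v → (fun x : (({1, aM} : Set Q)ᶜ : Set Q) => isXa x.1) u = (fun x : (({1, aM} : Set Q)ᶜ : Set Q) => isXa x.1) v := by
      rintro u v huv
      simp only
      have hadj : G.Adj u.1 v.1 := huv
      rcases adj_cases hadj with ⟨i, j, hu, hv⟩ | ⟨c, hu, hv⟩
      · simp [hu, hv]
      · have hu2 := u.2
        have hv2 := v.2
        rcases hu with h | h | h | h
        · exact absurd (Or.inl h) hu2
        · exact absurd (Or.inr h) hu2
        all_goals rcases hv with h' | h' | h' | h'
        · exact absurd (Or.inl h') hv2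
        · exact absurd (Or.inr h') hv2
        · simp [h, h']
        · simp [h, h']
        · exact absurd (Or.inl h') hv2
        · exact absurd (Or.inr h') hv2
        · simp [h, h']
        · simp [h, h']
    have hr := hcon.preconnected ⟨a 1, ha1⟩ ⟨xa 0, hxa0⟩
    have := reach_inv _ hf hr
    simp at this
  have hlow : ∀ j ∈ S, 2 ≤ j := by
    rintro j ⟨s, rfl, hnc⟩
    by_contra hlt
    push_neg at hlt
    have hcases : (1 : Q) ∉ s ∨ aM ∉ s := by
      by_contra hc
      push_neg at hc
      have hsub : ({1, aM} : Set Q) ⊆ s := by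
        rintro x (rfl | rfl)
        exacts [hc.1, hc.2]
      have := Set.ncard_le_ncard hsub s.toFinite
      rw [Set.ncard_pair hOneNe] at this
      omega
    rcases hcases with hd | hd
    · exact hnc (connected_of_dom G sᶜ 1 hd fun u hu => dom_one hu)
    · exact hnc (connected_of_dom G sᶜ aM hd fun u hu => dom_a_m hu)
  exact le_antisymm (Nat.sInf_le h2) (le_csInf ⟨2, h2⟩ hlow)

end ktwo

section cardsec
variable {k : ℕ}

lemma card_comp (hk : 1 ≤ k) :
    Nat.card ((enhancedPowerGraph (QuaternionGroup (2 ^ k))).induce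
      {g : QuaternionGroup (2 ^ k) | g ≠ 1 ∧ orderOf g ≠ 2}).ConnectedComponent =
      2 ^ k + 1 := by
  haveI : NeZero (2^k) := ⟨pow_ne_zero k two_ne_zero⟩
  set Q := QuaternionGroup (2^k) with hQ
  set G := enhancedPowerGraph Q with hG
  set T : Set Q := {g : Q | g ≠ 1 ∧ orderOf g ≠ 2} with hT
  set Γ := G.induce T with hΓ
  set aM : Q := a ((2^k:ℕ) : ZMod (2*2^k)) with haM
  -- memberships
  have hmem_a : ∀ i : ZMod (2*2^k), a i ≠ (1:Q) → (a i : Q) ≠ aM → (a i : Q) ∈ T := by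
    intro i h1 h2
    refine ⟨h1, fun ho => h2 ?_⟩
    exact eq_a_m_of_orderOf_eq_two ho
  have hmem_xa : ∀ c : ZMod (2*2^k), (xa c : Q) ∈ T := by
    intro c
    refine ⟨fun h => ?_, fun h => ?_⟩
    · rw [one_def] at h; cases h
    · rw [orderOf_xa] at h; omega
  have haM_not : aM ∉ T := fun h => h.2 orderOf_a_m
  have ha1T : (a 1 : Q) ∈ T := hmem_a 1 (a_one_mem_T hk).1 (a_one_mem_T hk).2
  -- the invariant
  have hinv : ∀ u v : T, Γ.Adj u v → Fcls u.1 = Fcls v.1 := by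
    rintro u v huv
    have hadj : G.Adj u.1 v.1 := huv
    rcases adj_cases hadj with ⟨i, j, hu, hv⟩ | ⟨c, hu, hv⟩
    · simp [hu, hv]
    · have hu2 := u.2
      have hv2 := v.2
      rcases hu with h | h | h | h
      · exact absurd (h ▸ hu2) (fun hh => hh.1 rfl)
      · exact absurd (h ▸ hu2) (fun hh => hh.2 orderOf_a_m)
      all_goals rcases hv with h' | h' | h' | h'
      · exact absurd (h' ▸ hv2) (fun hh => hh.1 rfl)
      · exact absurd (h' ▸ hv2) (fun hh => hh.2 orderOf_a_m)
      · simp [h, h']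
      · simp only [h, h', Fcls_xa, val_cast_shift]
      · exact absurd (h' ▸ hv2) (fun hh => hh.1 rfl)
      · exact absurd (h' ▸ hv2) (fun hh => hh.2 orderOf_a_m)
      · simp only [h, h', Fcls_xa, val_cast_shift]
      · simp [h, h']
  let Φ : Γ.ConnectedComponent → Option (ZMod (2^k)) :=
    SimpleGraph.ConnectedComponent.lift (fun x => Fcls x.1)
      (fun u v p _ => reach_inv (fun x => Fcls x.1) hinv ⟨p⟩)
  let Ψ : Option (ZMod (2^k)) → Γ.ConnectedComponent := fun o =>
    match o with
    | none => Γ.connectedComponentMk ⟨a 1, ha1T⟩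
    | some j => Γ.connectedComponentMk ⟨xa ((j.val : ℕ) : ZMod (2*2^k)), hmem_xa _⟩
  have hΦΨ : ∀ o, Φ (Ψ o) = o := by
    rintro (_ | j)
    · rfl
    · show Fcls (xa ((j.val : ℕ) : ZMod (2*2^k)) : Q) = some j
      rw [Fcls_xa]
      congr 1
      have hjlt : j.val < 2*2^k := by
        have := j.val_lt
        omega
      rw [ZMod.val_natCast_of_lt hjlt, ZMod.natCast_val, ZMod.cast_id]
  have hΨΦ : ∀ c, Ψ (Φ c) = c := by
    refine SimpleGraph.ConnectedComponent.ind ?_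
    rintro ⟨u, hu⟩
    cases u with
    | a i =>
      show Γ.connectedComponentMk ⟨a 1, ha1T⟩ = Γ.connectedComponentMk ⟨a i, hu⟩
      by_cases hcase : (1 : ZMod (2*2^k)) = i
      · subst hcase; rfl
      · apply SimpleGraph.ConnectedComponent.connectedComponentMk_eq_of_adj
        show G.Adj (a 1) (a i)
        refine ⟨fun h => hcase (by injection h), a 1, Subgroup.mem_zpowers _, ⟨(i.val : ℤ), ?_⟩⟩
        show (a 1 : Q) ^ ((i.val : ℕ) : ℤ) = a i
        rw [a_one_zpow]
        congr 1
        push_cast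
        rw [ZMod.natCast_val, ZMod.cast_id]
    | xa c =>
      show Γ.connectedComponentMk ⟨xa ((((c.val : ℕ) : ZMod (2^k)).val : ℕ) : ZMod (2*2^k)), _⟩
        = Γ.connectedComponentMk ⟨xa c, hu⟩
      have hvv : (((c.val : ℕ) : ZMod (2^k))).val = c.val % 2^k := ZMod.val_natCast _ _
      rcases Nat.lt_or_ge c.val (2^k) with hlt | hge
      · have h2 : ((((c.val : ℕ) : ZMod (2^k)).val : ℕ) : ZMod (2*2^k)) = c := by
          rw [hvv, Nat.mod_eq_of_lt hlt, ZMod.natCast_val, ZMod.cast_id]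
        exact congrArg Γ.connectedComponentMk (Subtype.ext (congrArg xa h2))
      · have hlt2 : c.val < 2*2^k := c.val_lt
        have hmod : c.val % 2^k = c.val - 2^k := by
          rw [Nat.mod_eq_sub_mod hge, Nat.mod_eq_of_lt (by omega)]
        have hcast : ((((c.val : ℕ) : ZMod (2^k)).val : ℕ) : ZMod (2*2^k))
            = c + ((2^k : ℕ) : ZMod (2*2^k)) := by
          rw [hvv, hmod, Nat.cast_sub hge, ZMod.natCast_val, ZMod.cast_id, sub_eq_add_neg,
            neg_m_eq]
        rw [hcast]  -- hope it rewrites inside the subtype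
        apply SimpleGraph.ConnectedComponent.connectedComponentMk_eq_of_adj
        show G.Adj (xa (c + ((2^k : ℕ) : ZMod (2*2^k)))) (xa c)
        refine ⟨fun h => ?_, xa c, ?_, Subgroup.mem_zpowers _⟩
        · have : c + ((2^k : ℕ) : ZMod (2*2^k)) = c := by injection h
          exact m_ne_zero_zmod (by linear_combination this)
        · refine ⟨((3:ℕ):ℤ), ?_⟩
          show (xa c : Q) ^ ((3:ℕ):ℤ) = xa (c + ((2^k : ℕ) : ZMod (2*2^k)))
          rw [zpow_natCast, xa_pow_three]
  have e : Γ.ConnectedComponent ≃ Option (ZMod (2^k)) := ⟨Φ, Ψ, hΨΦ, hΦΨ⟩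
  rw [Nat.card_congr e, Finite.card_option, Nat.card_zmod]

end cardsec

end aux

theorem stmt_16 (n : ℕ) (hn : 3 ≤ n) :
    vertexConnectivity (enhancedPowerGraph (QuaternionGroup (2 ^ (n - 2)))) = 2 ∧
      Nat.card ((enhancedPowerGraph (QuaternionGroup (2 ^ (n - 2)))).induce
        {g : QuaternionGroup (2 ^ (n - 2)) | g ≠ 1 ∧ orderOf g ≠ 2}).ConnectedComponent =
        2 ^ (n - 2) + 1 := by
  exact ⟨vc_eq_two (by omega : 1 ≤ n - 2), card_comp (by omega : 1 ≤ n - 2)⟩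
end
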